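/- Let k be a positive integer and let (a_i)_{i≥1}, (b_i)_{i≥1}, (d_i)_{1≤i≤k} be bounded sequences of nonnegative reals with a_i < 1 for all i. On ℓ²(ℕ, ℂ) with standard orthonormal basis (e_i), let T1 and T2 be the backward weighted shifts T1 e_0 = T2 e_0 = 0, T1 e_i = a_i e_{i−1}, T2 e_i = b_i e_{i−1} (i ≥ 1), and let T12 be the diagonal operator T12 e_{i−1} = d_i e_{i−1} for 1 ≤ i ≤ k and T12 e_j = 0 for j ≥ k. Then the block operator T = [[T1, T12],[0, T2]] on ℓ²(ℕ,ℂ) ⊕ ℓ²(ℕ,ℂ) is a contraction if and only if d_1² ≤ 1 − a_1², d_i² ≤ (1 − a_i²)(1 − b_{i−1}²) for 2 ≤ i ≤ k, and b_j ≤ 1 for all j ≥ k. -/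

import Mathlib

open ContinuousLinearMap

noncomputable section

local notation "ℓ²" => lp (fun _ : ℕ => ℂ) 2

lemma aux_real (a0 d0 bb S T : ℝ) (ha0 : 0 ≤ a0) (ha1 : a0 < 1)
    (hcond : d0 ^ 2 ≤ (1 - a0 ^ 2) * (1 - bb ^ 2)) :
    (a0 * S + d0 * T) ^ 2 + (bb * T) ^ 2 ≤ S ^ 2 + T ^ 2 := by
  have hu : (0:ℝ) < 1 - a0 ^ 2 := by nlinarith
  nlinarith [sq_nonneg ((1 - a0 ^ 2) * S - a0 * d0 * T),
    mul_nonneg (sq_nonneg T) (sub_nonneg.mpr hcond), hu]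

lemma aux_pointwise (a0 d0 bb : ℝ) (s t : ℂ) (ha0 : 0 ≤ a0) (ha1 : a0 < 1) (hd : 0 ≤ d0)
    (hb0 : 0 ≤ bb) (hcond : d0 ^ 2 ≤ (1 - a0 ^ 2) * (1 - bb ^ 2)) :
    ‖(a0 : ℂ) * s + (d0 : ℂ) * t‖ ^ 2 + ‖(bb : ℂ) * t‖ ^ 2 ≤ ‖s‖ ^ 2 + ‖t‖ ^ 2 := by
  have h1 : ‖(a0 : ℂ) * s + (d0 : ℂ) * t‖ ≤ a0 * ‖s‖ + d0 * ‖t‖ := by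
    refine (norm_add_le _ _).trans ?_
    simp [norm_mul, Complex.norm_real, abs_of_nonneg ha0, abs_of_nonneg hd]
  have h2 : ‖(bb : ℂ) * t‖ = bb * ‖t‖ := by
    simp [norm_mul, Complex.norm_real, abs_of_nonneg hb0]
  have h3 : ‖(a0 : ℂ) * s + (d0 : ℂ) * t‖ ^ 2 ≤ (a0 * ‖s‖ + d0 * ‖t‖) ^ 2 :=
    pow_le_pow_left₀ (norm_nonneg _) h1 2
  have h4 := aux_real a0 d0 bb ‖s‖ ‖t‖ ha0 ha1 hcond
  rw [h2]; linarith

lemma aux_converse (a0 d0 bb : ℝ) (ha0 : 0 ≤ a0) (ha1 : a0 < 1)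
    (h : ∀ s : ℝ, (a0 * s + d0) ^ 2 + bb ^ 2 ≤ s ^ 2 + 1) :
    d0 ^ 2 ≤ (1 - a0 ^ 2) * (1 - bb ^ 2) := by
  have hu : (0:ℝ) < 1 - a0 ^ 2 := by nlinarith
  have key := h (a0 * d0 / (1 - a0 ^ 2))
  have e1 : a0 * (a0 * d0 / (1 - a0 ^ 2)) + d0 = d0 / (1 - a0 ^ 2) := by
    field_simp; ring
  rw [e1] at key
  have key2 := mul_le_mul_of_nonneg_right key (sq_nonneg (1 - a0 ^ 2))
  have e2 : (d0 / (1 - a0 ^ 2)) ^ 2 * (1 - a0 ^ 2) ^ 2 = d0 ^ 2 := by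
    field_simp
  have e3 : (a0 * d0 / (1 - a0 ^ 2)) ^ 2 * (1 - a0 ^ 2) ^ 2 = a0 ^ 2 * d0 ^ 2 := by
    field_simp
  rw [add_mul, add_mul, e2, e3] at key2
  have key3 : d0 ^ 2 * (1 - a0 ^ 2) ≤ ((1 - a0 ^ 2) * (1 - bb ^ 2)) * (1 - a0 ^ 2) := by
    nlinarith [key2]
  exact le_of_mul_le_mul_right key3 hu

lemma norm_single_one (i : ℕ) : ‖(lp.single 2 i (1:ℂ) : ℓ²)‖ = 1 := by
  have := lp.norm_single (E := fun _ : ℕ => ℂ) (p := 2) (by norm_num) i (1:ℂ)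
  simpa using this

lemma hasSum_norm_sq (f : ℓ²) : HasSum (fun i => ‖f i‖ ^ 2) (‖f‖ ^ 2) := by
  have := lp.hasSum_norm (E := fun _ : ℕ => ℂ) (p := 2) (by norm_num) f
  simpa [Real.rpow_two] using this

lemma coord_hasSum (S : ℓ² →L[ℂ] ℓ²) (f : ℓ²) (j : ℕ) :
    HasSum (fun i => f i * (S (lp.single 2 i 1) : ∀ _, ℂ) j) ((S f : ∀ _, ℂ) j) := by
  have h0 : HasSum (fun i => (lp.single 2 i (f i) : ℓ²)) f :=
    lp.hasSum_single (by norm_num) f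
  have h1 : HasSum (fun i : ℕ => (f i) • (lp.single 2 i (1:ℂ) : ℓ²)) f := by
    have he : ∀ i : ℕ, (f i) • (lp.single 2 i (1:ℂ) : ℓ²) = lp.single 2 i (f i) := by
      intro i
      rw [← lp.single_smul, smul_eq_mul, mul_one]
    simpa [he] using h0
  have h2 := h1.mapL S
  have h3 := h2.mapL (innerSL ℂ (lp.single 2 j (1:ℂ)))
  simp only [map_smul, innerSL_apply_apply] at h3
  have h4 : ∀ g : ℓ², (inner ℂ (lp.single 2 j (1:ℂ)) g : ℂ) = (g : ∀ _, ℂ) j := by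
    intro g
    rw [lp.inner_single_left]
    simp [inner]
  rw [h4] at h3
  simpa only [h4, smul_eq_mul] using h3

lemma coordShift (S : ℓ² →L[ℂ] ℓ²) (c : ℕ → ℂ) (h0 : S (lp.single 2 0 1) = 0)
    (hS : ∀ i : ℕ, S (lp.single 2 (i + 1) 1) = c (i + 1) • lp.single 2 i 1) (f : ℓ²) (j : ℕ) :
    (S f : ∀ _, ℂ) j = c (j + 1) * f (j + 1) := by
  have h := coord_hasSum S f j
  have h2 : HasSum (fun i => f i * (S (lp.single 2 i 1) : ∀ _, ℂ) j)
      (f (j + 1) * (S (lp.single 2 (j + 1) 1) : ∀ _, ℂ) j) := by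
    apply _root_.hasSum_single (j + 1)
    intro i hi
    match i with
    | 0 => simp [h0]
    | (m + 1) =>
      have hmj : j ≠ m := fun e => hi (by rw [e])
      rw [hS m]
      simp [lp.coeFn_smul, lp.single_apply_ne 2 m _ hmj, Pi.single_apply, hmj]
  rw [h.unique h2, hS j]
  simp [lp.coeFn_smul, lp.single_apply_self]
  ring

lemma coordDiag (S : ℓ² →L[ℂ] ℓ²) (c : ℕ → ℂ)
    (hS : ∀ i : ℕ, S (lp.single 2 i 1) = c i • lp.single 2 i 1) (f : ℓ²) (j : ℕ) :
    (S f : ∀ _, ℂ) j = c j * f j := by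
  have h := coord_hasSum S f j
  have h2 : HasSum (fun i => f i * (S (lp.single 2 i 1) : ∀ _, ℂ) j)
      (f j * (S (lp.single 2 j 1) : ∀ _, ℂ) j) := by
    apply _root_.hasSum_single j
    intro i hi
    rw [hS i]
    simp [lp.coeFn_smul, lp.single_apply_ne 2 i _ (Ne.symm hi), Pi.single_apply, Ne.symm hi]
  rw [h.unique h2, hS j]
  simp [lp.coeFn_smul, lp.single_apply_self]
  ring

set_option maxHeartbeats 2000000 in
theorem stmt_18 (k : ℕ) (hk : 1 ≤ k)
    (a b d : ℕ → ℝ)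
    (ha : ∀ i, 1 ≤ i → 0 ≤ a i ∧ a i < 1)
    (hb : ∀ i, 1 ≤ i → 0 ≤ b i)
    (hbbdd : ∃ C : ℝ, ∀ i, 1 ≤ i → b i ≤ C)
    (hd : ∀ i, 1 ≤ i → i ≤ k → 0 ≤ d i)
    (T₁ T₂ T₁₂ : ℓ² →L[ℂ] ℓ²)
    (hT₁0 : T₁ (lp.single 2 0 1) = 0)
    (hT₁ : ∀ i : ℕ, T₁ (lp.single 2 (i + 1) 1) = (a (i + 1) : ℂ) • lp.single 2 i 1)
    (hT₂0 : T₂ (lp.single 2 0 1) = 0)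
    (hT₂ : ∀ i : ℕ, T₂ (lp.single 2 (i + 1) 1) = (b (i + 1) : ℂ) • lp.single 2 i 1)
    (hT₁₂ : ∀ j : ℕ, j < k → T₁₂ (lp.single 2 j 1) = (d (j + 1) : ℂ) • lp.single 2 j 1)
    (hT₁₂0 : ∀ j : ℕ, k ≤ j → T₁₂ (lp.single 2 j 1) = 0)
    (T : WithLp 2 (ℓ² × ℓ²) →L[ℂ] WithLp 2 (ℓ² × ℓ²))
    (hT : ∀ (x y : ℓ²),
      T ((WithLp.equiv 2 (ℓ² × ℓ²)).symm (x, y)) =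
        (WithLp.equiv 2 (ℓ² × ℓ²)).symm (T₁ x + T₁₂ y, T₂ y)) :
    ‖T‖ ≤ 1 ↔
      (d 1 ^ 2 ≤ 1 - a 1 ^ 2 ∧
       (∀ i, 2 ≤ i → i ≤ k → d i ^ 2 ≤ (1 - a i ^ 2) * (1 - b (i - 1) ^ 2)) ∧
       ∀ j, k ≤ j → b j ≤ 1) := by
  have hnsq : ∀ (p q : ℓ²), ‖(WithLp.equiv 2 (ℓ² × ℓ²)).symm (p, q)‖ ^ 2 = ‖p‖ ^ 2 + ‖q‖ ^ 2 := by
    intro p q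
    rw [WithLp.prod_norm_sq_eq_of_L2]; rfl
  constructor
  · intro hTle
    have htest : ∀ v : WithLp 2 (ℓ² × ℓ²), ‖T v‖ ≤ ‖v‖ := fun v =>
      (T.le_opNorm v).trans (mul_le_of_le_one_left (norm_nonneg v) hTle)
    refine ⟨?_, ?_, ?_⟩
    · -- d 1 ^ 2 ≤ 1 - a 1 ^ 2
      have h := aux_converse (a 1) (d 1) 0 (ha 1 le_rfl).1 (ha 1 le_rfl).2 ?_
      · nlinarith [h]
      intro s
      set v := (WithLp.equiv 2 (ℓ² × ℓ²)).symm
        ((s : ℂ) • (lp.single 2 1 1 : ℓ²), (lp.single 2 0 1 : ℓ²)) with hv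
      have hTv : T v = (WithLp.equiv 2 (ℓ² × ℓ²)).symm
          (((a 1 * s + d 1 : ℝ) : ℂ) • (lp.single 2 0 1 : ℓ²), 0) := by
        rw [hv, hT]
        congr 1
        refine Prod.ext ?_ ?_
        · show T₁ ((s : ℂ) • (lp.single 2 1 1 : ℓ²)) + T₁₂ (lp.single 2 0 1) = _
          rw [map_smul, hT₁ 0, hT₁₂ 0 (by omega), smul_smul, ← add_smul]
          congr 1
          push_cast; ring
        · exact hT₂0
      have hle := pow_le_pow_left₀ (norm_nonneg _) (htest v) 2
      rw [hTv, hnsq] at hle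
      rw [hv, hnsq] at hle
      rw [norm_smul, norm_smul, norm_single_one, norm_single_one, norm_zero] at hle
      simp only [Complex.norm_real, Real.norm_eq_abs, mul_one, sq_abs] at hle
      norm_num at hle ⊢
      linarith
    · -- middle condition
      intro i h2i hik
      obtain ⟨m, rfl⟩ : ∃ m, i = m + 2 := ⟨i - 2, by omega⟩
      have h := aux_converse (a (m + 2)) (d (m + 2)) (b (m + 1))
        (ha (m + 2) (by omega)).1 (ha (m + 2) (by omega)).2 ?_
      · simpa using h
      intro s
      set v := (WithLp.equiv 2 (ℓ² × ℓ²)).symm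
        ((s : ℂ) • (lp.single 2 (m + 2) 1 : ℓ²), (lp.single 2 (m + 1) 1 : ℓ²)) with hv
      have hTv : T v = (WithLp.equiv 2 (ℓ² × ℓ²)).symm
          (((a (m + 2) * s + d (m + 2) : ℝ) : ℂ) • (lp.single 2 (m + 1) 1 : ℓ²),
           ((b (m + 1) : ℝ) : ℂ) • (lp.single 2 m 1 : ℓ²)) := by
        rw [hv, hT]
        congr 1
        refine Prod.ext ?_ ?_
        · show T₁ ((s : ℂ) • (lp.single 2 (m + 2) 1 : ℓ²)) + T₁₂ (lp.single 2 (m + 1) 1) = _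
          rw [map_smul, hT₁ (m + 1), hT₁₂ (m + 1) (by omega), smul_smul, ← add_smul]
          congr 1
          push_cast; ring
        · exact hT₂ m
      have hle := pow_le_pow_left₀ (norm_nonneg _) (htest v) 2
      rw [hTv, hnsq] at hle
      rw [hv, hnsq] at hle
      rw [norm_smul, norm_smul, norm_smul, norm_single_one, norm_single_one,
        norm_single_one] at hle
      simp only [Complex.norm_real, Real.norm_eq_abs, mul_one, sq_abs] at hle
      norm_num at hle ⊢
      linarith
    · -- b j ≤ 1 for j ≥ k
      intro j hj
      obtain ⟨m, rfl⟩ : ∃ m, j = m + 1 := ⟨j - 1, by omega⟩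
      set v := (WithLp.equiv 2 (ℓ² × ℓ²)).symm
        ((0 : ℓ²), (lp.single 2 (m + 1) 1 : ℓ²)) with hv
      have hTv : T v = (WithLp.equiv 2 (ℓ² × ℓ²)).symm
          ((0 : ℓ²), ((b (m + 1) : ℝ) : ℂ) • (lp.single 2 m 1 : ℓ²)) := by
        rw [hv, hT]
        congr 1
        refine Prod.ext ?_ ?_
        · show T₁ 0 + T₁₂ (lp.single 2 (m + 1) 1) = _
          rw [map_zero, hT₁₂0 (m + 1) hj, add_zero]
        · exact hT₂ m
      have hle := pow_le_pow_left₀ (norm_nonneg _) (htest v) 2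
      rw [hTv, hnsq] at hle
      rw [hv, hnsq] at hle
      rw [norm_smul, norm_single_one, norm_single_one, norm_zero] at hle
      simp only [Complex.norm_real, Real.norm_eq_abs, mul_one, sq_abs] at hle
      norm_num at hle
      exact le_trans (le_abs_self _) hle
  · rintro ⟨h1, h2, h3⟩
    refine T.opNorm_le_bound (by norm_num) fun v => ?_
    set x : ℓ² := ((WithLp.equiv 2 (ℓ² × ℓ²)) v).1 with hx
    set y : ℓ² := ((WithLp.equiv 2 (ℓ² × ℓ²)) v).2 with hy
    have hveq : (WithLp.equiv 2 (ℓ² × ℓ²)).symm (x, y) = v := by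
      rw [hx, hy, Prod.mk.eta, Equiv.symm_apply_apply]
    rw [← hveq, hT x y, one_mul]
    have key : ‖(WithLp.equiv 2 (ℓ² × ℓ²)).symm (T₁ x + T₁₂ y, T₂ y)‖ ^ 2 ≤
        ‖(WithLp.equiv 2 (ℓ² × ℓ²)).symm (x, y)‖ ^ 2 := by
      rw [hnsq, hnsq]
      set u : ℓ² := T₁ x + T₁₂ y with hudef
      have hu : ∀ j, (u : ∀ _, ℂ) j =
          (a (j + 1) : ℂ) * x (j + 1) +
            (if j < k then ((d (j + 1) : ℝ) : ℂ) else 0) * y j := by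
        intro j
        have e1 : ((T₁ x : ℓ²) : ∀ _, ℂ) j = (a (j + 1) : ℂ) * x (j + 1) :=
          coordShift T₁ (fun i => (a i : ℂ)) hT₁0 hT₁ x j
        have e2 : ((T₁₂ y : ℓ²) : ∀ _, ℂ) j =
            (if j < k then ((d (j + 1) : ℝ) : ℂ) else 0) * y j := by
          refine coordDiag T₁₂ (fun i => if i < k then ((d (i + 1) : ℝ) : ℂ) else 0) ?_ y j
          intro i
          by_cases h : i < k
          · simp [h, hT₁₂ i h]
          · simp [h, hT₁₂0 i (by omega)]
        rw [hudef]
        rw [lp.coeFn_add, Pi.add_apply, e1, e2]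
      have hw : ∀ j, ((T₂ y : ℓ²) : ∀ _, ℂ) j = (b (j + 1) : ℂ) * y (j + 1) :=
        coordShift T₂ (fun i => (b i : ℂ)) hT₂0 hT₂ y
      have hU := hasSum_norm_sq u
      have hW := hasSum_norm_sq (T₂ y)
      have hX := hasSum_norm_sq x
      have hY := hasSum_norm_sq y
      have hU1 : HasSum (fun n => ‖u (n + 1)‖ ^ 2) (‖u‖ ^ 2 - ‖u 0‖ ^ 2) :=
        (hasSum_nat_add_iff (f := fun i => ‖u i‖ ^ 2) 1).mpr (by simpa [Finset.sum_range_one] using hU)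
      have hY1 : HasSum (fun n => ‖y (n + 1)‖ ^ 2) (‖y‖ ^ 2 - ‖y 0‖ ^ 2) :=
        (hasSum_nat_add_iff (f := fun i => ‖y i‖ ^ 2) 1).mpr (by simpa [Finset.sum_range_one] using hY)
      have hX2 : HasSum (fun n => ‖x (n + 2)‖ ^ 2)
          (‖x‖ ^ 2 - (‖x 0‖ ^ 2 + ‖x 1‖ ^ 2)) :=
        (hasSum_nat_add_iff (f := fun i => ‖x i‖ ^ 2) 2).mpr (by
          simpa [Finset.sum_range_succ, Finset.sum_range_one, sub_add_eq_sub_sub] using hX)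
      have hterm : ∀ j : ℕ, ‖u (j + 1)‖ ^ 2 + ‖(T₂ y : ℓ²) j‖ ^ 2 ≤
          ‖x (j + 2)‖ ^ 2 + ‖y (j + 1)‖ ^ 2 := by
        intro j
        rw [hu (j + 1), hw j]
        by_cases hjk : j + 1 < k
        · rw [if_pos hjk]
          exact aux_pointwise (a (j + 2)) (d (j + 2)) (b (j + 1)) (x (j + 2)) (y (j + 1))
            (ha (j + 2) (by omega)).1 (ha (j + 2) (by omega)).2
            (hd (j + 2) (by omega) (by omega)) (hb (j + 1) (by omega))
            (by simpa using h2 (j + 2) (by omega) (by omega))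
        · rw [if_neg hjk]
          have hb1 : b (j + 1) ≤ 1 := h3 (j + 1) (by omega)
          have hb0 : 0 ≤ b (j + 1) := hb (j + 1) (by omega)
          have ha1 := (ha (j + 2) (by omega)).2
          have ha0 := (ha (j + 2) (by omega)).1
          have e1 : (0:ℝ) ≤ 1 - a (j + 2) ^ 2 := by nlinarith
          have e2 : (0:ℝ) ≤ 1 - b (j + 1) ^ 2 := by nlinarith
          refine le_trans (le_of_eq ?_) (aux_pointwise (a (j + 2)) 0 (b (j + 1)) (x (j + 2))
            (y (j + 1)) ha0 ha1 le_rfl hb0 (by nlinarith [mul_nonneg e1 e2]))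
          norm_num
      have hterm0 : ‖u 0‖ ^ 2 ≤ ‖x 1‖ ^ 2 + ‖y 0‖ ^ 2 := by
        rw [hu 0, if_pos (by omega : 0 < k)]
        have := aux_pointwise (a 1) (d 1) 0 (x 1) (y 0)
          (ha 1 le_rfl).1 (ha 1 le_rfl).2 (hd 1 le_rfl hk) le_rfl (by nlinarith)
        simpa using this.trans (by norm_num)
      have hmain := hasSum_le hterm (hU1.add hW) (hX2.add hY1)
      have hx0 : (0:ℝ) ≤ ‖x 0‖ ^ 2 := sq_nonneg _
      linarith
    nlinarith [norm_nonneg ((WithLp.equiv 2 (ℓ² × ℓ²)).symm (T₁ x + T₁₂ y, T₂ y)),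
      norm_nonneg ((WithLp.equiv 2 (ℓ² × ℓ²)).symm (x, y)), key]
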